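/- Let $H = \mathbb{Z}[x_1,\dots,x_n]/(x_1^2 - x_1 x_n,\dots,x_{n-1}^2 - x_{n-1} x_n, x_n^2)$. The primitive elements $u$ of the degree-2 part of $H$ (a free $\mathbb{Z}$-module with basis $x_1,\dots,x_n$) satisfying $u^2 = 0$ are exactly $\pm x_n$ and $\pm(2x_i - x_n)$ for $1 \le i \le n-1$; in particular there are exactly $2n$ of them. -/

import Mathlib

open MvPolynomial

set_option maxHeartbeats 1000000
set_option synthInstance.maxHeartbeats 1000000


/-- `ℤ[X,Y]/(X² - t·XY, Y²)`: elements `a + x X + y Y + d XY`. -/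
@[ext] structure R4 (t : ℤ) : Type where
  a : ℤ
  x : ℤ
  y : ℤ
  d : ℤ

namespace R4
variable {t : ℤ}

instance : Add (R4 t) := ⟨fun p q => ⟨p.a+q.a, p.x+q.x, p.y+q.y, p.d+q.d⟩⟩
instance : Neg (R4 t) := ⟨fun p => ⟨-p.a, -p.x, -p.y, -p.d⟩⟩
instance : Mul (R4 t) := ⟨fun p q =>
  ⟨p.a*q.a, p.a*q.x+p.x*q.a, p.a*q.y+p.y*q.a,
    p.a*q.d+p.d*q.a+p.x*q.y+p.y*q.x + t*(p.x*q.x)⟩⟩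
instance : Zero (R4 t) := ⟨⟨0,0,0,0⟩⟩
instance : One (R4 t) := ⟨⟨1,0,0,0⟩⟩

@[simp] lemma add_a (p q : R4 t) : (p+q).a = p.a+q.a := rfl
@[simp] lemma add_x (p q : R4 t) : (p+q).x = p.x+q.x := rfl
@[simp] lemma add_y (p q : R4 t) : (p+q).y = p.y+q.y := rfl
@[simp] lemma add_d (p q : R4 t) : (p+q).d = p.d+q.d := rfl
@[simp] lemma neg_a (p : R4 t) : (-p).a = -p.a := rfl
@[simp] lemma neg_x (p : R4 t) : (-p).x = -p.x := rfl
@[simp] lemma neg_y (p : R4 t) : (-p).y = -p.y := rfl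
@[simp] lemma neg_d (p : R4 t) : (-p).d = -p.d := rfl
@[simp] lemma mul_a (p q : R4 t) : (p*q).a = p.a*q.a := rfl
@[simp] lemma mul_x (p q : R4 t) : (p*q).x = p.a*q.x+p.x*q.a := rfl
@[simp] lemma mul_y (p q : R4 t) : (p*q).y = p.a*q.y+p.y*q.a := rfl
@[simp] lemma mul_d (p q : R4 t) :
    (p*q).d = p.a*q.d+p.d*q.a+p.x*q.y+p.y*q.x + t*(p.x*q.x) := rfl
@[simp] lemma zero_a : (0 : R4 t).a = 0 := rfl
@[simp] lemma zero_x : (0 : R4 t).x = 0 := rfl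
@[simp] lemma zero_y : (0 : R4 t).y = 0 := rfl
@[simp] lemma zero_d : (0 : R4 t).d = 0 := rfl
@[simp] lemma one_a : (1 : R4 t).a = 1 := rfl
@[simp] lemma one_x : (1 : R4 t).x = 0 := rfl
@[simp] lemma one_y : (1 : R4 t).y = 0 := rfl
@[simp] lemma one_d : (1 : R4 t).d = 0 := rfl

protected lemma add_assoc' (p q r : R4 t) : p + q + r = p + (q + r) := by ext <;> simp <;> ring
protected lemma zero_add' (p : R4 t) : 0 + p = p := by ext <;> simp
protected lemma add_zero' (p : R4 t) : p + 0 = p := by ext <;> simp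
protected lemma add_comm' (p q : R4 t) : p + q = q + p := by ext <;> simp <;> ring
protected lemma neg_add_cancel' (p : R4 t) : -p + p = 0 := by ext <;> simp
protected lemma mul_assoc' (p q r : R4 t) : p * q * r = p * (q * r) := by ext <;> simp <;> ring
protected lemma one_mul' (p : R4 t) : 1 * p = p := by ext <;> simp
protected lemma mul_one' (p : R4 t) : p * 1 = p := by ext <;> simp
protected lemma left_distrib' (p q r : R4 t) : p * (q + r) = p * q + p * r := by
  ext <;> simp <;> ring
protected lemma right_distrib' (p q r : R4 t) : (p + q) * r = p * r + q * r := by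
  ext <;> simp <;> ring
protected lemma mul_comm' (p q : R4 t) : p * q = q * p := by ext <;> simp <;> ring
protected lemma zero_mul' (p : R4 t) : 0 * p = 0 := by ext <;> simp
protected lemma mul_zero' (p : R4 t) : p * 0 = 0 := by ext <;> simp

instance : CommRing (R4 t) where
  add := (· + ·)
  mul := (· * ·)
  neg := (- ·)
  zero := 0
  one := 1
  add_assoc := R4.add_assoc'
  zero_add := R4.zero_add'
  add_zero := R4.add_zero'
  add_comm := R4.add_comm'
  neg_add_cancel := R4.neg_add_cancel'
  mul_assoc := R4.mul_assoc'
  one_mul := R4.one_mul'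
  mul_one := R4.mul_one'
  left_distrib := R4.left_distrib'
  right_distrib := R4.right_distrib'
  mul_comm := R4.mul_comm'
  zero_mul := R4.zero_mul'
  mul_zero := R4.mul_zero'
  natCast n := ⟨n,0,0,0⟩
  natCast_zero := by ext <;> simp
  natCast_succ := by intros; ext <;> simp
  intCast z := ⟨z,0,0,0⟩
  intCast_ofNat := by intros; ext <;> first | rfl | simp
  intCast_negSucc := by
    intro m
    show (⟨Int.negSucc m, 0, 0, 0⟩ : R4 t) = -(⟨((m+1 : ℕ) : ℤ), 0, 0, 0⟩ : R4 t)
    ext <;> simp [Int.negSucc_eq] <;> push_cast <;> ring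
  nsmul n p := ⟨n*p.a, n*p.x, n*p.y, n*p.d⟩
  nsmul_zero := by intro p; ext <;> show ((0:ℕ):ℤ) * _ = 0 <;> simp
  nsmul_succ := by intro m p; ext <;> show ((m+1:ℕ):ℤ) * _ = (m:ℤ) * _ + _ <;> push_cast <;> ring
  zsmul n p := ⟨n*p.a, n*p.x, n*p.y, n*p.d⟩
  zsmul_zero' := by intro p; ext <;> show (0:ℤ) * _ = 0 <;> simp
  zsmul_succ' := by intro m p; ext <;> show ((m.succ:ℕ):ℤ) * _ = ((m:ℕ):ℤ) * _ + _ <;> push_cast <;> ring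
  zsmul_neg' := by intro m p; ext <;> show (Int.negSucc m) * _ = -(((m.succ:ℕ):ℤ) * _) <;> rw [Int.negSucc_eq] <;> push_cast <;> ring

@[simp] lemma intCast_a (c : ℤ) : (c : R4 t).a = c := rfl
@[simp] lemma intCast_x (c : ℤ) : (c : R4 t).x = 0 := rfl
@[simp] lemma intCast_y (c : ℤ) : (c : R4 t).y = 0 := rfl
@[simp] lemma intCast_d (c : ℤ) : (c : R4 t).d = 0 := rfl

def XX : R4 t := ⟨0,1,0,0⟩
def YY : R4 t := ⟨0,0,1,0⟩

@[simp] lemma X_mul_X : (XX : R4 t) * XX = ⟨0,0,0,t⟩ := by ext <;> simp [XX]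
@[simp] lemma X_mul_Y : (XX : R4 t) * YY = ⟨0,0,0,1⟩ := by ext <;> simp [XX, YY]
@[simp] lemma Y_mul_Y : (YY : R4 t) * YY = 0 := by ext <;> simp [YY]

@[simp] lemma XX_a : (XX : R4 t).a = 0 := rfl
@[simp] lemma XX_x : (XX : R4 t).x = 1 := rfl
@[simp] lemma XX_y : (XX : R4 t).y = 0 := rfl
@[simp] lemma XX_d : (XX : R4 t).d = 0 := rfl
@[simp] lemma YY_a : (YY : R4 t).a = 0 := rfl
@[simp] lemma YY_x : (YY : R4 t).x = 0 := rfl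
@[simp] lemma YY_y : (YY : R4 t).y = 1 := rfl
@[simp] lemma YY_d : (YY : R4 t).d = 0 := rfl
end R4


/-- The relations `x_i² - x_i x_n` (`i < n`) and `x_n²` of `H^*(𝓗_n; ℤ)`,
with generators indexed by `Fin (n+1)` and `x_n` the last generator. -/
noncomputable def Hrel (n : ℕ) (i : Fin (n + 1)) : MvPolynomial (Fin (n + 1)) ℤ :=
  if i = Fin.last n then X i ^ 2 else X i ^ 2 - X i * X (Fin.last n)

/-- `H = ℤ[x₁,…,x_n]/(x_i² - x_i x_n, x_n²)`. -/
abbrev HRing (n : ℕ) := MvPolynomial (Fin (n + 1)) ℤ ⧸ Ideal.span (Set.range (Hrel n))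

/-- The class `x_i` in `HRing n`. -/
noncomputable def hx (n : ℕ) (i : Fin (n + 1)) : HRing n :=
  Ideal.Quotient.mk _ (X i)

lemma quot_lemma {n : ℕ} {R : Type} [CommRing R] (f : MvPolynomial (Fin (n+1)) ℤ →+* R)
    (hv : ∀ k, f (Hrel n k) = 0) (u : Fin (n + 1) → ℤ)
    (h : (∑ i : Fin (n + 1), (u i : HRing n) * hx n i) ^ 2 = 0) :
    (∑ i : Fin (n + 1), (u i : R) * f (X i)) ^ 2 = 0 := by
  have hle : Ideal.span (Set.range (Hrel n)) ≤ RingHom.ker f := by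
    rw [Ideal.span_le]
    rintro x ⟨k, rfl⟩
    exact hv k
  have h0 : ∀ a ∈ Ideal.span (Set.range (Hrel n)), f a = 0 := fun a ha => hle ha
  let φ : HRing n →+* R := Ideal.Quotient.lift _ _ h0
  have h2 := congrArg φ h
  simpa [φ, hx, map_sum, map_pow] using h2

lemma fact_general {n : ℕ} (u : Fin (n + 1) → ℤ)
    (h : (∑ i : Fin (n + 1), (u i : HRing n) * hx n i) ^ 2 = 0) (t : ℤ)
    {i j : Fin (n + 1)} (hij : i ≠ j) (hi : i ≠ Fin.last n)
    (hjl : j = Fin.last n → t = 1) (hjn : j ≠ Fin.last n → t = 0) :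
    t * (u i)^2 + 2 * (u i * u j) = 0 := by
  set v : Fin (n + 1) → R4 t :=
    fun k => (if k = i then R4.XX else 0) + (if k = j then R4.YY else 0) with hv
  set f : MvPolynomial (Fin (n+1)) ℤ →+* R4 t := eval₂Hom (Int.castRingHom (R4 t)) v with hf
  have hfX : ∀ k, f (X k) = v k := fun k => eval₂Hom_X' _ _ _
  have hvlast : v (Fin.last n) = if j = Fin.last n then R4.YY else 0 := by
    rcases eq_or_ne j (Fin.last n) with rfl | hj
    · simp [hv, Ne.symm hi]
    · simp [hv, Ne.symm hi, Ne.symm hj, hj]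
  have hrel : ∀ k, f (Hrel n k) = 0 := by
    intro k
    rcases eq_or_ne k (Fin.last n) with rfl | hk
    · have hH : Hrel n (Fin.last n) = X (Fin.last n) ^ 2 := if_pos rfl
      rw [hH, map_pow, hfX, hvlast, pow_two]
      split_ifs <;> ext <;> simp
    · have hH : Hrel n k = X k ^ 2 - X k * X (Fin.last n) := if_neg hk
      rw [hH, map_sub, map_mul, map_pow, hfX, hfX, hvlast, pow_two]
      rcases eq_or_ne k i with rfl | hki
      · have hvk : v k = R4.XX := by simp [hv, hij]
        rw [hvk]
        rcases eq_or_ne j (Fin.last n) with hjl' | hjn'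
        · rw [if_pos hjl', hjl hjl']
          ext <;> simp
        · rw [if_neg hjn', hjn hjn']
          ext <;> simp
      · rcases eq_or_ne k j with rfl | hkj
        · have hvk : v k = R4.YY := by simp [hv, hki]
          rw [hvk, if_neg hk]
          ext <;> simp
        · have hvk : v k = 0 := by simp [hv, hki, hkj]
          rw [hvk]
          ext <;> simp
  have key := quot_lemma f hrel u h
  simp only [hfX] at key
  have hsum : (∑ k : Fin (n+1), (u k : R4 t) * v k)
      = (u i : R4 t) * R4.XX + (u j : R4 t) * R4.YY := by
    simp [hv, mul_add, Finset.sum_add_distrib, mul_ite, mul_zero, Finset.sum_ite_eq']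
  rw [hsum] at key
  have h2 := congrArg R4.d key
  simp only [pow_two, add_mul, mul_add, R4.mul_d, R4.mul_a, R4.mul_x, R4.mul_y,
    R4.add_a, R4.add_x, R4.add_y, R4.add_d, R4.intCast_a, R4.intCast_x, R4.intCast_y,
    R4.intCast_d, R4.XX_a, R4.XX_x, R4.XX_y, R4.XX_d, R4.YY_a, R4.YY_x, R4.YY_y, R4.YY_d,
    R4.zero_a, R4.zero_x, R4.zero_y, R4.zero_d,
    mul_zero, zero_mul, add_zero, zero_add, mul_one, one_mul] at h2
  linear_combination h2

lemma fact_offdiag {n : ℕ} (u : Fin (n + 1) → ℤ)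
    (h : (∑ i : Fin (n + 1), (u i : HRing n) * hx n i) ^ 2 = 0)
    {i j : Fin (n + 1)} (hij : i ≠ j) (hi : i ≠ Fin.last n) (hj : j ≠ Fin.last n) :
    u i * u j = 0 := by
  have := fact_general u h 0 hij hi (fun hc => absurd hc hj) (fun _ => rfl)
  linarith

lemma fact_diag {n : ℕ} (u : Fin (n + 1) → ℤ)
    (h : (∑ i : Fin (n + 1), (u i : HRing n) * hx n i) ^ 2 = 0)
    {i : Fin (n + 1)} (hi : i ≠ Fin.last n) :
    u i * (u i + 2 * u (Fin.last n)) = 0 := by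
  have := fact_general u h 1 hi hi (fun _ => rfl) (fun hc => absurd rfl hc)
  linear_combination this

lemma hx_last_sq (n : ℕ) : hx n (Fin.last n) ^ 2 = 0 := by
  have h0 : (Ideal.Quotient.mk (Ideal.span (Set.range (Hrel n))) (Hrel n (Fin.last n))) = 0 :=
    Ideal.Quotient.eq_zero_iff_mem.mpr (Ideal.subset_span ⟨_, rfl⟩)
  have hH : Hrel n (Fin.last n) = X (Fin.last n) ^ 2 := if_pos rfl
  rw [hH, map_pow] at h0
  exact h0

lemma hx_sq (n : ℕ) {i : Fin (n + 1)} (hi : i ≠ Fin.last n) :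
    hx n i ^ 2 = hx n i * hx n (Fin.last n) := by
  have h0 : (Ideal.Quotient.mk (Ideal.span (Set.range (Hrel n))) (Hrel n i)) = 0 :=
    Ideal.Quotient.eq_zero_iff_mem.mpr (Ideal.subset_span ⟨_, rfl⟩)
  have hH : Hrel n i = X i ^ 2 - X i * X (Fin.last n) := if_neg hi
  rw [hH, map_sub, map_mul, map_pow] at h0
  exact sub_eq_zero.mp h0

lemma ite_split {M : Type} [AddZeroClass M] {m : ℕ} {i l : Fin m} (hil : i ≠ l)
    (A B : M) (j : Fin m) :
    (if j = i then A else if j = l then B else 0)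
      = (if j = i then A else 0) + (if j = l then B else 0) := by
  rcases eq_or_ne j i with rfl | hji
  · rw [if_pos rfl, if_pos rfl, if_neg hil, add_zero]
  · rw [if_neg hji, if_neg hji, zero_add]

lemma gcd_eq_one_of_unit_dvd {n : ℕ} (u : Fin (n + 1) → ℤ) {k : Fin (n + 1)}
    (hk : u k = 1 ∨ u k = -1) : Finset.univ.gcd u = 1 := by
  have h1 : Finset.univ.gcd u ∣ u k := Finset.gcd_dvd (Finset.mem_univ k)
  have h2 : Finset.univ.gcd u ∣ 1 := by
    rcases hk with hk | hk
    · rw [hk] at h1; exact h1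
    · rw [hk] at h1; exact (dvd_neg.mp h1)
  have h3 : IsUnit (Finset.univ.gcd u) := isUnit_of_dvd_one h2
  rw [← Finset.normalize_gcd, normalize_eq_one]
  exact h3

/-- Backward direction: the listed vectors square to zero etc. -/
lemma backward {n : ℕ} (u : Fin (n + 1) → ℤ)
    (hE : ∃ ε : ℤ, (ε = 1 ∨ ε = -1) ∧
      ((u = fun j => if j = Fin.last n then ε else 0) ∨
        ∃ i : Fin (n + 1), i ≠ Fin.last n ∧
          u = fun j => if j = i then 2 * ε
            else if j = Fin.last n then -ε else 0)) :
    u ≠ 0 ∧ Finset.univ.gcd u = 1 ∧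
      (∑ i : Fin (n + 1), (u i : HRing n) * hx n i) ^ 2 = 0 := by
  obtain ⟨ε, hε, hu⟩ := hE
  have hεunit : ε = 1 ∨ ε = -1 := hε
  have hεne : ε ≠ 0 := by rcases hε with rfl | rfl <;> decide
  rcases hu with rfl | ⟨i, hi, rfl⟩
  · refine ⟨?_, ?_, ?_⟩
    · intro h0
      have := congrFun h0 (Fin.last n)
      simp at this
      exact hεne this
    · exact gcd_eq_one_of_unit_dvd _ (k := Fin.last n) (by simpa using hεunit)
    · have hsum : (∑ k : Fin (n+1),
          ((if k = Fin.last n then ε else 0 : ℤ) : HRing n) * hx n k)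
          = (ε : HRing n) * hx n (Fin.last n) := by
        simp [apply_ite (fun z : ℤ => (z : HRing n)), ite_mul, zero_mul, Finset.sum_ite_eq']
      rw [hsum, mul_pow, hx_last_sq, mul_zero]
  · refine ⟨?_, ?_, ?_⟩
    · intro h0
      have := congrFun h0 i
      simp at this
      exact hεne this
    · refine gcd_eq_one_of_unit_dvd _ (k := Fin.last n) ?_
      rw [if_neg (Ne.symm hi), if_pos rfl]
      rcases hεunit with rfl | rfl
      · right; rfl
      · left; rfl
    · have hsum : (∑ k : Fin (n+1),
          ((if k = i then 2 * ε else if k = Fin.last n then -ε else 0 : ℤ) : HRing n) * hx n k)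
          = ((2 * ε : ℤ) : HRing n) * hx n i + ((-ε : ℤ) : HRing n) * hx n (Fin.last n) := by
        rw [Finset.sum_congr rfl (fun k _ => by
          rw [ite_split hi (2 * ε) (-ε) k, Int.cast_add, apply_ite (fun z : ℤ => (z : HRing n)),
            apply_ite (fun z : ℤ => (z : HRing n)), Int.cast_zero, add_mul, ite_mul, ite_mul,
            zero_mul])]
        rw [Finset.sum_add_distrib, Finset.sum_ite_eq' Finset.univ i,
          Finset.sum_ite_eq' Finset.univ (Fin.last n)]
        simp
      rw [hsum]
      have h1 := hx_sq n hi
      have h2 := hx_last_sq n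
      push_cast
      linear_combination (4 * (ε : HRing n)^2) * h1 + ((ε : HRing n)^2) * h2

/-- Forward direction. -/
lemma forward {n : ℕ} (u : Fin (n + 1) → ℤ) (hne : u ≠ 0)
    (hgcd : Finset.univ.gcd u = 1)
    (h : (∑ i : Fin (n + 1), (u i : HRing n) * hx n i) ^ 2 = 0) :
    ∃ ε : ℤ, (ε = 1 ∨ ε = -1) ∧
      ((u = fun j => if j = Fin.last n then ε else 0) ∨
        ∃ i : Fin (n + 1), i ≠ Fin.last n ∧
          u = fun j => if j = i then 2 * ε
            else if j = Fin.last n then -ε else 0) := by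
  set l := Fin.last n with hl
  by_cases hS : ∀ i, i ≠ l → u i = 0
  · -- u = (u l) · e_l
    have hdvd : u l ∣ Finset.univ.gcd u := by
      refine Finset.dvd_gcd (fun j _ => ?_)
      rcases eq_or_ne j l with rfl | hj
      · exact dvd_refl _
      · rw [hS j hj]; exact dvd_zero _
    rw [hgcd] at hdvd
    have hunit : u l = 1 ∨ u l = -1 := Int.isUnit_iff.mp (isUnit_of_dvd_one hdvd)
    refine ⟨u l, hunit, Or.inl ?_⟩
    funext j
    rcases eq_or_ne j l with rfl | hj
    · rw [if_pos rfl]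
    · rw [if_neg hj, hS j hj]
  · push_neg at hS
    obtain ⟨i₀, hi₀l, hi₀⟩ := hS
    have hd := fact_diag u h hi₀l
    have hval : u i₀ = -(2 * u l) := by
      rcases mul_eq_zero.mp hd with hc | hc
      · exact absurd hc hi₀
      · linarith
    have hrest : ∀ j, j ≠ l → j ≠ i₀ → u j = 0 := by
      intro j hjl hji
      rcases mul_eq_zero.mp (fact_offdiag u h (Ne.symm hji) hi₀l hjl) with hc | hc
      · exact absurd hc hi₀
      · exact hc
    have hdvd : u l ∣ Finset.univ.gcd u := by
      refine Finset.dvd_gcd (fun j _ => ?_)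
      rcases eq_or_ne j l with rfl | hjl
      · exact dvd_refl _
      · rcases eq_or_ne j i₀ with rfl | hji
        · rw [hval]; exact Dvd.dvd.neg_right ⟨2, by ring⟩
        · rw [hrest j hjl hji]; exact dvd_zero _
    rw [hgcd] at hdvd
    have hunit : u l = 1 ∨ u l = -1 := Int.isUnit_iff.mp (isUnit_of_dvd_one hdvd)
    refine ⟨-(u l), ?_, Or.inr ⟨i₀, hi₀l, ?_⟩⟩
    · rcases hunit with hc | hc <;> rw [hc] <;> [right; left] <;> ring
    · funext j
      rcases eq_or_ne j i₀ with rfl | hji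
      · rw [if_pos rfl, hval]; ring
      · rw [if_neg hji]
        rcases eq_or_ne j l with rfl | hjl
        · rw [if_pos rfl]; ring
        · rw [if_neg hjl, hrest j hjl hji]

/-- The parametrization of the solution set. -/
def param (n : ℕ) : Fin (n + 1) × Bool → (Fin (n + 1) → ℤ) := fun p =>
  let ε : ℤ := if p.2 then 1 else -1
  if p.1 = Fin.last n then (fun j => if j = Fin.last n then ε else 0)
  else fun j => if j = p.1 then 2 * ε else if j = Fin.last n then -ε else 0

lemma sgn_cases (s : Bool) : (if s then (1:ℤ) else -1) = 1 ∨ (if s then (1:ℤ) else -1) = -1 := by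
  cases s <;> simp

lemma param_injective (n : ℕ) : Function.Injective (param n) := by
  rintro ⟨i, s⟩ ⟨i', s'⟩ hEq
  have hss : ∀ (b b' : Bool), (if b then (1:ℤ) else -1) = (if b' then (1:ℤ) else -1) → b = b' := by
    decide
  have h2 : ∀ (b b' : Bool), (2 : ℤ) * (if b then (1:ℤ) else -1)
      = 2 * (if b' then (1:ℤ) else -1) → b = b' := by decide
  simp only [param] at hEq
  rcases eq_or_ne i (Fin.last n) with rfl | hi
  · rcases eq_or_ne i' (Fin.last n) with rfl | hi'
    · rw [if_pos rfl, if_pos rfl] at hEq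
      have := congrFun hEq (Fin.last n)
      rw [if_pos rfl, if_pos rfl] at this
      rw [hss _ _ this]
    · rw [if_pos rfl, if_neg hi'] at hEq
      have := congrFun hEq i'
      rw [if_neg hi', if_pos rfl] at this
      exfalso
      rcases sgn_cases s' with hc | hc <;> rw [hc] at this <;> simp at this
  · rcases eq_or_ne i' (Fin.last n) with rfl | hi'
    · rw [if_neg hi, if_pos rfl] at hEq
      have := congrFun hEq i
      rw [if_pos rfl, if_neg hi] at this
      exfalso
      rcases sgn_cases s with hc | hc <;> rw [hc] at this <;> simp at this
    · rw [if_neg hi, if_neg hi'] at hEq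
      have hii : i = i' := by
        by_contra hii
        have := congrFun hEq i
        rw [if_pos rfl, if_neg hii, if_neg hi] at this
        rcases sgn_cases s with hc | hc <;> rw [hc] at this <;> simp at this
      subst hii
      have := congrFun hEq i
      rw [if_pos rfl, if_pos rfl] at this
      rw [h2 _ _ this]

lemma param_range {n : ℕ} (u : Fin (n + 1) → ℤ) :
    (∃ ε : ℤ, (ε = 1 ∨ ε = -1) ∧
      ((u = fun j => if j = Fin.last n then ε else 0) ∨
        ∃ i : Fin (n + 1), i ≠ Fin.last n ∧
          u = fun j => if j = i then 2 * ε
            else if j = Fin.last n then -ε else 0)) ↔ u ∈ Set.range (param n) := by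
  constructor
  · rintro ⟨ε, hε, hu⟩
    have hs : ∃ s : Bool, (if s then (1:ℤ) else -1) = ε := by
      rcases hε with rfl | rfl
      · exact ⟨true, rfl⟩
      · exact ⟨false, rfl⟩
    obtain ⟨s, rfl⟩ := hs
    rcases hu with rfl | ⟨i, hi, rfl⟩
    · exact ⟨(Fin.last n, s), by simp [param]⟩
    · exact ⟨(i, s), by simp [param, if_neg hi]⟩
  · rintro ⟨⟨i, s⟩, rfl⟩
    refine ⟨if s then (1:ℤ) else -1, sgn_cases s, ?_⟩
    rcases eq_or_ne i (Fin.last n) with rfl | hi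
    · left; simp [param]
    · right; exact ⟨i, hi, by simp [param, if_neg hi]⟩

/-- **The primitive square-zero degree-2 classes of `H` are exactly `±x_n` and
`±(2x_i - x_n)`, `i < n`; in particular there are exactly `2(n+1)` of them**
(here the manifold has `n+1` stages). -/
theorem primitive_square_zero (n : ℕ) :
    (∀ u : Fin (n + 1) → ℤ,
      ((u ≠ 0 ∧ Finset.univ.gcd u = 1 ∧
          (∑ i : Fin (n + 1), (u i : HRing n) * hx n i) ^ 2 = 0) ↔
        (∃ ε : ℤ, (ε = 1 ∨ ε = -1) ∧
          ((u = fun j => if j = Fin.last n then ε else 0) ∨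
            ∃ i : Fin (n + 1), i ≠ Fin.last n ∧
              u = fun j => if j = i then 2 * ε
                else if j = Fin.last n then -ε else 0)))) ∧
    Set.ncard {u : Fin (n + 1) → ℤ |
        u ≠ 0 ∧ Finset.univ.gcd u = 1 ∧
          (∑ i : Fin (n + 1), (u i : HRing n) * hx n i) ^ 2 = 0} =
      2 * (n + 1) := by
  have hiff : ∀ u : Fin (n + 1) → ℤ,
      ((u ≠ 0 ∧ Finset.univ.gcd u = 1 ∧
          (∑ i : Fin (n + 1), (u i : HRing n) * hx n i) ^ 2 = 0) ↔
        (∃ ε : ℤ, (ε = 1 ∨ ε = -1) ∧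
          ((u = fun j => if j = Fin.last n then ε else 0) ∨
            ∃ i : Fin (n + 1), i ≠ Fin.last n ∧
              u = fun j => if j = i then 2 * ε
                else if j = Fin.last n then -ε else 0))) := by
    intro u
    constructor
    · rintro ⟨h1, h2, h3⟩
      exact forward u h1 h2 h3
    · exact backward u
  refine ⟨hiff, ?_⟩
  have hset : {u : Fin (n + 1) → ℤ |
      u ≠ 0 ∧ Finset.univ.gcd u = 1 ∧
        (∑ i : Fin (n + 1), (u i : HRing n) * hx n i) ^ 2 = 0}
      = Set.range (param n) := by
    ext u
    rw [Set.mem_setOf_eq, hiff u, param_range]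
  rw [hset, ← Set.image_univ, ← Finset.coe_univ, ← Finset.coe_image,
    Set.ncard_coe_finset, Finset.card_image_of_injective _ (param_injective n),
    Finset.card_univ, Fintype.card_prod, Fintype.card_fin, Fintype.card_bool]
  ring
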